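/- (Two-angle Kac/Loeve proposition.) Let (A, φ) be a non-commutative probability space and let (T_1, S_1) and (T_2, S_2) be two-faced pairs in A that are bi-free and satisfy φ(T_k) = 0 = φ(S_k) for k ∈ {1,2}. Fix θ_ℓ, θ_r ∈ (0, π/2) and set T_3 = cos(θ_ℓ)T_1 + sin(θ_ℓ)T_2, S_3 = cos(θ_r)S_1 + sin(θ_r)S_2, T_4 = −sin(θ_ℓ)T_1 + cos(θ_ℓ)T_2, S_4 = −sin(θ_r)S_1 + cos(θ_r)S_2. If (T_3, S_3) and (T_4, S_4) are bi-free, then (T_1, S_1) and (T_2, S_2) are bi-free central limit distributions. -/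

import Mathlib

open Finset

namespace BiFreeNL

open scoped Classical

/-- `i` and `j` lie in a common block of `P`. -/
def SameBlock {n : ℕ} (P : Finset (Finset (Fin n))) (i j : Fin n) : Prop :=
  ∃ V ∈ P, i ∈ V ∧ j ∈ V

/-- `P` is a partition of `{1, …, n}` (blocks are nonempty, and every point lies in a
unique block). -/
def IsPartition {n : ℕ} (P : Finset (Finset (Fin n))) : Prop :=
  (∀ V ∈ P, V.Nonempty) ∧ ∀ i : Fin n, ∃! V : Finset (Fin n), V ∈ P ∧ i ∈ V

/-- `P` refines `Q` : every block of `P` is contained in a block of `Q`. -/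
def Refines {n : ℕ} (P Q : Finset (Finset (Fin n))) : Prop :=
  ∀ V ∈ P, ∃ W ∈ Q, V ⊆ W

/-- The rank of `i` in the total order `≺_χ`, which reads the left indices
(`χ = true`) in increasing order followed by the right indices (`χ = false`) in
decreasing order.  This is `s_χ⁻¹`. -/
def chiRank {n : ℕ} (χ : Fin n → Bool) (i : Fin n) : ℕ :=
  if χ i = true then ((univ : Finset (Fin n)).filter fun j => χ j = true ∧ j < i).card
  else ((univ : Finset (Fin n)).filter fun j => χ j = true).card
    + ((univ : Finset (Fin n)).filter fun j => χ j = false ∧ i < j).card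

/-- `P` is a bi-non-crossing partition with respect to `χ`, i.e. `s_χ⁻¹ · P` is
non-crossing; equivalently no two distinct blocks cross with respect to `≺_χ`. -/
def IsBiNonCrossing {n : ℕ} (χ : Fin n → Bool) (P : Finset (Finset (Fin n))) : Prop :=
  IsPartition P ∧
    ∀ u₁ v₁ u₂ v₂ : Fin n,
      chiRank χ u₁ < chiRank χ v₁ → chiRank χ v₁ < chiRank χ u₂ →
        chiRank χ u₂ < chiRank χ v₂ →
        SameBlock P u₁ u₂ → SameBlock P v₁ v₂ → SameBlock P u₁ v₁

/-- The (finite) set `BNC(χ)` of bi-non-crossing partitions with respect to `χ`. -/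
noncomputable def BNC {n : ℕ} (χ : Fin n → Bool) : Finset (Finset (Finset (Fin n))) :=
  Finset.univ.filter fun P => IsBiNonCrossing χ P

/-- The maximal element `1_χ` of `BNC(χ)` : the partition with a single block. -/
def onePart (n : ℕ) : Finset (Finset (Fin n)) := {(Finset.univ : Finset (Fin n))}

/-- `μ` is the Möbius function of the lattice `BNC(χ)` : it vanishes off the
refinement order, and satisfies the two defining convolution identities. -/
def IsMoebius {n : ℕ} (χ : Fin n → Bool)
    (μ : Finset (Finset (Fin n)) → Finset (Finset (Fin n)) → ℂ) : Prop :=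
  (∀ P Q, ¬ Refines P Q → μ P Q = 0) ∧
  (∀ P Q, P ∈ BNC χ → Q ∈ BNC χ → Refines P Q →
    (∑ t ∈ (BNC χ).filter fun t => Refines P t ∧ Refines t Q, μ t Q)
      = if P = Q then 1 else 0) ∧
  (∀ P Q, P ∈ BNC χ → Q ∈ BNC χ → Refines P Q →
    (∑ t ∈ (BNC χ).filter fun t => Refines P t ∧ Refines t Q, μ P t)
      = if P = Q then 1 else 0)

/-- A family of Möbius functions, one for each `n` and `χ`. -/
def MoebiusFamily : Type :=
  ∀ n : ℕ, (Fin n → Bool) → Finset (Finset (Fin n)) → Finset (Finset (Fin n)) → ℂ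

variable {A : Type*} [Ring A] [Algebra ℂ A]

/-- `φ_π(Z_1, …, Z_n) = ∏_{V ∈ π} φ(Z_{k_1} ⋯ Z_{k_m})`, the product over the blocks
`V = {k_1 < ⋯ < k_m}` of `π` of the moments along the blocks. -/
noncomputable def phiPart {n : ℕ} (φ : A →ₗ[ℂ] ℂ) (Z : Fin n → A)
    (P : Finset (Finset (Fin n))) : ℂ :=
  ∏ V ∈ P, φ ((V.sort (· ≤ ·)).map Z).prod

/-- The `(ℓ, r)`-cumulant `κ_P(Z_1, …, Z_n) = ∑_{σ ∈ BNC(χ), σ ≤ P} φ_σ(Z) μ(σ, P)`. -/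
noncomputable def cumulant {n : ℕ} (φ : A →ₗ[ℂ] ℂ) (χ : Fin n → Bool)
    (μ : Finset (Finset (Fin n)) → Finset (Finset (Fin n)) → ℂ)
    (P : Finset (Finset (Fin n))) (Z : Fin n → A) : ℂ :=
  ∑ σ ∈ (BNC χ).filter fun σ => Refines σ P, phiPart φ Z σ * μ σ P


/-- The two-faced pairs `(T 0, S 0)` and `(T 1, S 1)` are bi-freely independent with
respect to `φ` : all mixed `(ℓ,r)`-cumulants vanish. -/
def TwoFacedBiFree {A : Type*} [Ring A] [Algebra ℂ A] (φ : A →ₗ[ℂ] ℂ)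
    (μ : MoebiusFamily) (T S : Fin 2 → A) : Prop :=
  ∀ (n : ℕ), 2 ≤ n → ∀ (χ : Fin n → Bool) (ε : Fin n → Fin 2), (∃ i j, ε i ≠ ε j) →
    cumulant φ χ (μ n χ) (onePart n)
      (fun i => if χ i = true then T (ε i) else S (ε i)) = 0

/-- `(T, S)` is a bi-free central limit distribution : all `(ℓ,r)`-cumulants of order
at least three vanish. -/
def IsBiFreeCentralLimit {A : Type*} [Ring A] [Algebra ℂ A] (φ : A →ₗ[ℂ] ℂ)
    (μ : MoebiusFamily) (T S : A) : Prop :=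
  ∀ (n : ℕ), 3 ≤ n → ∀ χ : Fin n → Bool,
    cumulant φ χ (μ n χ) (onePart n) (fun i => if χ i = true then T else S) = 0

/-- `(T 0, S 0)` and `(T 1, S 1)` have equal second order `(ℓ,r)`-cumulants. -/
def EqualSecondOrderCumulants {A : Type*} [Ring A] [Algebra ℂ A] (φ : A →ₗ[ℂ] ℂ)
    (μ : MoebiusFamily) (T S : Fin 2 → A) : Prop :=
  ∀ χ : Fin 2 → Bool,
    cumulant φ χ (μ 2 χ) (onePart 2) (fun i => if χ i = true then T 0 else S 0)
      = cumulant φ χ (μ 2 χ) (onePart 2) (fun i => if χ i = true then T 1 else S 1)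

section AuxProof


section Aux

variable {n : ℕ} [DecidableEq (Fin n)]

lemma list_prod_update_of_not_mem (Z : Fin n → A) (i : Fin n) (x : A)
    (l : List (Fin n)) (h : i ∉ l) :
    (l.map (Function.update Z i x)).prod = (l.map Z).prod := by
  congr 1
  exact List.map_congr_left fun a ha =>
    Function.update_of_ne (by rintro rfl; exact h ha) _ _

lemma list_prod_update_add (Z : Fin n → A) (i : Fin n) (x y : A)
    (l : List (Fin n)) (hc : l.count i = 1) :
    (l.map (Function.update Z i (x + y))).prod
      = (l.map (Function.update Z i x)).prod + (l.map (Function.update Z i y)).prod := by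
  induction l with
  | nil => simp at hc
  | cons a t ih =>
    rw [List.count_cons] at hc
    by_cases hai : a = i
    · subst hai
      simp only [beq_self_eq_true, if_pos] at hc
      have hnot : a ∉ t := List.count_eq_zero.mp (by omega)
      simp only [List.map_cons, List.prod_cons, Function.update_self,
        list_prod_update_of_not_mem Z a _ t hnot, add_mul]
    · have hc' : t.count i = 1 := by
        simp only [beq_iff_eq, if_neg hai] at hc; omega
      simp only [List.map_cons, List.prod_cons,
        Function.update_of_ne hai, ih hc', mul_add]

lemma list_prod_update_smul (Z : Fin n → A) (i : Fin n) (c : ℂ) (x : A)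
    (l : List (Fin n)) (hc : l.count i = 1) :
    (l.map (Function.update Z i (c • x))).prod
      = c • (l.map (Function.update Z i x)).prod := by
  induction l with
  | nil => simp at hc
  | cons a t ih =>
    rw [List.count_cons] at hc
    by_cases hai : a = i
    · subst hai
      have hnot : a ∉ t := List.count_eq_zero.mp (by simp only [beq_self_eq_true, if_pos] at hc; omega)
      simp only [List.map_cons, List.prod_cons, Function.update_self,
        list_prod_update_of_not_mem Z a _ t hnot, smul_mul_assoc]
    · have hc' : t.count i = 1 := by
        simp only [beq_iff_eq, if_neg hai] at hc; omega
      simp only [List.map_cons, List.prod_cons,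
        Function.update_of_ne hai, ih hc', mul_smul_comm]

lemma count_sort_one {V : Finset (Fin n)} {i : Fin n} (h : i ∈ V) :
    (V.sort (· ≤ ·)).count i = 1 :=
  List.count_eq_one_of_mem (Finset.sort_nodup (s := V) _) ((Finset.mem_sort _).2 h)

lemma phiPart_erase_congr (φ : A →ₗ[ℂ] ℂ) (Z : Fin n → A)
    (P : Finset (Finset (Fin n))) (hP : IsPartition P)
    {V : Finset (Fin n)} (hVP : V ∈ P) {i : Fin n} (hiV : i ∈ V)
    (huniq : ∀ W, (W ∈ P ∧ i ∈ W) → W = V) (w : A) :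
    ∏ W ∈ P.erase V, φ ((W.sort (· ≤ ·)).map (Function.update Z i w)).prod
      = ∏ W ∈ P.erase V, φ ((W.sort (· ≤ ·)).map Z).prod := by
  refine Finset.prod_congr rfl fun W hW => ?_
  have hiW : i ∉ W := by
    intro hmem
    exact (Finset.ne_of_mem_erase hW) (huniq W ⟨Finset.mem_of_mem_erase hW, hmem⟩)
  rw [list_prod_update_of_not_mem Z i w _ (fun hmem => hiW ((Finset.mem_sort _).1 hmem))]

lemma phiPart_update_add (φ : A →ₗ[ℂ] ℂ) (Z : Fin n → A)
    (P : Finset (Finset (Fin n))) (hP : IsPartition P) (i : Fin n) (x y : A) :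
    phiPart φ (Function.update Z i (x + y)) P
      = phiPart φ (Function.update Z i x) P + phiPart φ (Function.update Z i y) P := by
  obtain ⟨V, ⟨hVP, hiV⟩, huniq⟩ := hP.2 i
  have huniq' : ∀ W, (W ∈ P ∧ i ∈ W) → W = V := fun W hw => huniq W hw
  unfold phiPart
  rw [← Finset.mul_prod_erase _ _ hVP, ← Finset.mul_prod_erase _ _ hVP,
    ← Finset.mul_prod_erase _ _ hVP,
    phiPart_erase_congr φ Z P hP hVP hiV huniq',
    phiPart_erase_congr φ Z P hP hVP hiV huniq',
    phiPart_erase_congr φ Z P hP hVP hiV huniq',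
    list_prod_update_add Z i x y _ (count_sort_one hiV), map_add, add_mul]

lemma phiPart_update_smul (φ : A →ₗ[ℂ] ℂ) (Z : Fin n → A)
    (P : Finset (Finset (Fin n))) (hP : IsPartition P) (i : Fin n) (c : ℂ) (x : A) :
    phiPart φ (Function.update Z i (c • x)) P
      = c • phiPart φ (Function.update Z i x) P := by
  obtain ⟨V, ⟨hVP, hiV⟩, huniq⟩ := hP.2 i
  have huniq' : ∀ W, (W ∈ P ∧ i ∈ W) → W = V := fun W hw => huniq W hw
  unfold phiPart
  rw [← Finset.mul_prod_erase _ _ hVP, ← Finset.mul_prod_erase _ _ hVP,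
    phiPart_erase_congr φ Z P hP hVP hiV huniq',
    phiPart_erase_congr φ Z P hP hVP hiV huniq',
    list_prod_update_smul Z i c x _ (count_sort_one hiV), map_smul,
    smul_eq_mul, smul_eq_mul, mul_assoc]

lemma mem_filter_isPartition {χ : Fin n → Bool} {P : Finset (Finset (Fin n))}
    {σ : Finset (Finset (Fin n))}
    (hσ : σ ∈ (BNC χ).filter fun σ => Refines σ P) : IsPartition σ := by
  have h1 := (Finset.mem_filter.1 hσ).1
  exact ((Finset.mem_filter.1 h1).2).1

lemma cumulant_update_add (φ : A →ₗ[ℂ] ℂ) (χ : Fin n → Bool)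
    (μn : Finset (Finset (Fin n)) → Finset (Finset (Fin n)) → ℂ)
    (P : Finset (Finset (Fin n))) (Z : Fin n → A) (i : Fin n) (x y : A) :
    cumulant φ χ μn P (Function.update Z i (x + y))
      = cumulant φ χ μn P (Function.update Z i x)
        + cumulant φ χ μn P (Function.update Z i y) := by
  unfold cumulant
  rw [← Finset.sum_add_distrib]
  refine Finset.sum_congr rfl fun σ hσ => ?_
  rw [phiPart_update_add φ Z σ (mem_filter_isPartition hσ), add_mul]

lemma cumulant_update_smul (φ : A →ₗ[ℂ] ℂ) (χ : Fin n → Bool)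
    (μn : Finset (Finset (Fin n)) → Finset (Finset (Fin n)) → ℂ)
    (P : Finset (Finset (Fin n))) (Z : Fin n → A) (i : Fin n) (c : ℂ) (x : A) :
    cumulant φ χ μn P (Function.update Z i (c • x))
      = c • cumulant φ χ μn P (Function.update Z i x) := by
  unfold cumulant
  rw [Finset.smul_sum]
  refine Finset.sum_congr rfl fun σ hσ => ?_
  rw [phiPart_update_smul φ Z σ (mem_filter_isPartition hσ), smul_mul_assoc]

end Aux

noncomputable def cumulantML {n : ℕ} (φ : A →ₗ[ℂ] ℂ) (χ : Fin n → Bool)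
    (μn : Finset (Finset (Fin n)) → Finset (Finset (Fin n)) → ℂ) :
    MultilinearMap ℂ (fun _ : Fin n => A) ℂ where
  toFun Z := cumulant φ χ μn (onePart n) Z
  map_update_add' Z i x y := cumulant_update_add φ χ μn (onePart n) Z i x y
  map_update_smul' Z i c x := cumulant_update_smul φ χ μn (onePart n) Z i c x

lemma cumulant_expand {n : ℕ} (φ : A →ₗ[ℂ] ℂ) (χ : Fin n → Bool)
    (μn : Finset (Finset (Fin n)) → Finset (Finset (Fin n)) → ℂ)
    (c : Fin 2 → Fin n → ℂ) (W : Fin 2 → Fin n → A) :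
    cumulant φ χ μn (onePart n) (fun i => c 0 i • W 0 i + c 1 i • W 1 i)
      = ∑ ε : Fin n → Fin 2, (∏ i, c (ε i) i)
          * cumulant φ χ μn (onePart n) (fun i => W (ε i) i) := by
  have h0 : (fun i => c 0 i • W 0 i + c 1 i • W 1 i)
      = fun i => ∑ j : Fin 2, c j i • W j i := by
    funext i; rw [Fin.sum_univ_two]
  have h1 := (cumulantML φ χ μn).map_sum (fun i (j : Fin 2) => c j i • W j i)
  have h2 : ∀ ε : Fin n → Fin 2,
      (cumulantML φ χ μn) (fun i => c (ε i) i • W (ε i) i)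
        = (∏ i, c (ε i) i) * cumulant φ χ μn (onePart n) (fun i => W (ε i) i) := by
    intro ε
    rw [(cumulantML φ χ μn).map_smul_univ (fun i => c (ε i) i) (fun i => W (ε i) i),
      smul_eq_mul]
    rfl
  calc cumulant φ χ μn (onePart n) (fun i => c 0 i • W 0 i + c 1 i • W 1 i)
      = (cumulantML φ χ μn) (fun i => ∑ j : Fin 2, c j i • W j i) := by rw [← h0]; rfl
    _ = ∑ ε : Fin n → Fin 2, (cumulantML φ χ μn) (fun i => c (ε i) i • W (ε i) i) := h1
    _ = _ := Finset.sum_congr rfl fun ε _ => h2 ε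


lemma key_expand {A : Type*} [Ring A] [Algebra ℂ A] (φ : A →ₗ[ℂ] ℂ)
    (μ : MoebiusFamily) (P Q : Fin 2 → A)
    (hbfPQ : TwoFacedBiFree φ μ P Q) {n : ℕ} (hn : 2 ≤ n) (χ : Fin n → Bool)
    (cL cR : Fin 2 → ℂ) :
    cumulant φ χ (μ n χ) (onePart n)
      (fun i => if χ i = true then cL 0 • P 0 + cL 1 • P 1 else cR 0 • Q 0 + cR 1 • Q 1)
    = (∏ i, if χ i = true then cL 0 else cR 0)
        * cumulant φ χ (μ n χ) (onePart n) (fun i => if χ i = true then P 0 else Q 0)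
      + (∏ i, if χ i = true then cL 1 else cR 1)
        * cumulant φ χ (μ n χ) (onePart n) (fun i => if χ i = true then P 1 else Q 1) := by
  have hfun : (fun i => if χ i = true then cL 0 • P 0 + cL 1 • P 1
        else cR 0 • Q 0 + cR 1 • Q 1)
      = fun i => (if χ i = true then cL 0 else cR 0) • (if χ i = true then P 0 else Q 0)
          + (if χ i = true then cL 1 else cR 1) • (if χ i = true then P 1 else Q 1) := by
    funext i; by_cases h : χ i = true <;> simp [h]
  rw [hfun, cumulant_expand φ χ (μ n χ)
    (fun j i => if χ i = true then cL j else cR j)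
    (fun j i => if χ i = true then P j else Q j)]
  have hne : (fun _ : Fin n => (0 : Fin 2)) ≠ (fun _ => 1) := by
    intro h
    have := congrFun h ⟨0, by omega⟩
    simp at this
  have hzero : ∀ ε ∈ (Finset.univ : Finset (Fin n → Fin 2)),
      ε ∉ ({(fun _ => 0), (fun _ => 1)} : Finset (Fin n → Fin 2)) →
      (∏ i, (fun j i => if χ i = true then cL j else cR j) (ε i) i)
        * cumulant φ χ (μ n χ) (onePart n)
            (fun i => (fun j i => if χ i = true then P j else Q j) (ε i) i) = 0 := by
    intro ε _ hε
    simp only [Finset.mem_insert, Finset.mem_singleton] at hε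
    push_neg at hε
    have hnc : ∃ i j, ε i ≠ ε j := by
      by_contra hcon
      push_neg at hcon
      have h2 : ∀ k : Fin 2, k = 0 ∨ k = 1 := by decide
      rcases h2 (ε ⟨0, by omega⟩) with h | h
      · exact hε.1 (funext fun j => (hcon j ⟨0, by omega⟩).trans h)
      · exact hε.2 (funext fun j => (hcon j ⟨0, by omega⟩).trans h)
    rw [hbfPQ n hn χ ε hnc, mul_zero]
  rw [← Finset.sum_subset (Finset.subset_univ {(fun _ : Fin n => (0:Fin 2)), fun _ => 1})
    hzero, Finset.sum_pair hne]


lemma trig_facts {θ : ℝ} (h : θ ∈ Set.Ioo 0 (Real.pi / 2)) :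
    0 < Real.cos θ ∧ Real.cos θ < 1 ∧ 0 < Real.sin θ ∧ Real.sin θ < 1 := by
  obtain ⟨h1, h2⟩ := h
  have hpi := Real.pi_pos
  have hc : 0 < Real.cos θ := Real.cos_pos_of_mem_Ioo ⟨by linarith, h2⟩
  have hs : 0 < Real.sin θ := Real.sin_pos_of_pos_of_lt_pi h1 (by linarith)
  have hsq := Real.sin_sq_add_cos_sq θ
  exact ⟨hc, by nlinarith, hs, by nlinarith⟩

lemma sum_prod_lt_one {n : ℕ} (hn : 3 ≤ n) (α : Fin n → ℝ)
    (hα : ∀ i, α i ∈ Set.Ioo 0 (Real.pi / 2)) :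
    0 < (∏ i, Real.cos (α i)) ∧ 0 < (∏ i, Real.sin (α i)) ∧
      (∏ i, Real.cos (α i)) + (∏ i, Real.sin (α i)) < 1 := by
  have hf : ∀ i, 0 < Real.cos (α i) ∧ Real.cos (α i) < 1 ∧
      0 < Real.sin (α i) ∧ Real.sin (α i) < 1 := fun i => trig_facts (hα i)
  have hCpos : 0 < ∏ i, Real.cos (α i) := Finset.prod_pos fun i _ => (hf i).1
  have hSpos : 0 < ∏ i, Real.sin (α i) := Finset.prod_pos fun i _ => (hf i).2.2.1
  refine ⟨hCpos, hSpos, ?_⟩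
  set i0 : Fin n := ⟨0, by omega⟩
  set i1 : Fin n := ⟨1, by omega⟩
  set i2 : Fin n := ⟨2, by omega⟩
  have h01 : i0 ≠ i1 := by simp [i0, i1, Fin.ext_iff]
  have h02 : i0 ≠ i2 := by simp [i0, i2, Fin.ext_iff]
  have h12 : i1 ≠ i2 := by simp [i1, i2, Fin.ext_iff]
  set t : Finset (Fin n) := {i0, i1, i2} with ht
  have h0t : i0 ∉ ({i1, i2} : Finset (Fin n)) := by simp [h01, h02]
  have h1t : i1 ∉ ({i2} : Finset (Fin n)) := by simp [h12]
  have hprodt : ∀ g : Fin n → ℝ, ∏ i ∈ t, g i = g i0 * (g i1 * g i2) := by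
    intro g
    rw [ht, Finset.prod_insert h0t, Finset.prod_insert h1t, Finset.prod_singleton]
  have hboundC : ∀ g : Fin n → ℝ, (∀ i, 0 < g i) → (∀ i, g i < 1) →
      (∏ i, g i) ≤ g i0 * (g i1 * g i2) := by
    intro g hg0 hg1
    rw [← Finset.prod_mul_prod_compl t g, hprodt g]
    have hle1 : ∏ i ∈ tᶜ, g i ≤ 1 :=
      Finset.prod_le_one (fun i _ => (hg0 i).le) (fun i _ => (hg1 i).le)
    have hpos : 0 < g i0 * (g i1 * g i2) := by
      have := hg0 i0; have := hg0 i1; have := hg0 i2; positivity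
    nlinarith [Finset.prod_pos (fun i (_ : i ∈ tᶜ) => hg0 i)]
  have hC := hboundC _ (fun i => (hf i).1) (fun i => (hf i).2.1)
  have hS := hboundC _ (fun i => (hf i).2.2.1) (fun i => (hf i).2.2.2)
  have hcos2 : Real.cos (α i0) * Real.cos (α i1) + Real.sin (α i0) * Real.sin (α i1) ≤ 1 := by
    rw [mul_comm (Real.cos (α i0)), mul_comm (Real.sin (α i0)), ← Real.cos_sub]
    exact Real.cos_le_one _
  have h0 := hf i0; have h1 := hf i1; have h2 := hf i2
  have hC' : (∏ i, Real.cos (α i)) < Real.cos (α i0) * Real.cos (α i1) := by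
    nlinarith [mul_pos h0.1 h1.1, h2.2.1, h0.1, h1.1]
  have hS' : (∏ i, Real.sin (α i)) < Real.sin (α i0) * Real.sin (α i1) := by
    nlinarith [mul_pos h0.2.2.1 h1.2.2.1, h2.2.2.2, h0.2.2.1, h1.2.2.1]
  linarith

end AuxProof

end BiFreeNL

open BiFreeNL in
/-- **Two-angle Kac/Loeve proposition.** -/
theorem kac_loeve_two_angles
    {A : Type*} [Ring A] [Algebra ℂ A]
    (φ : A →ₗ[ℂ] ℂ) (hφ : φ 1 = 1)
    (μ : MoebiusFamily) (hμ : ∀ (n : ℕ) (χ : Fin n → Bool), IsMoebius χ (μ n χ))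
    (T S : Fin 2 → A)
    (hcent : ∀ k, φ (T k) = 0 ∧ φ (S k) = 0)
    (hbf : TwoFacedBiFree φ μ T S)
    (θl θr : ℝ) (hθl : θl ∈ Set.Ioo 0 (Real.pi / 2)) (hθr : θr ∈ Set.Ioo 0 (Real.pi / 2))
    (hbf34 : TwoFacedBiFree φ μ
      ![(Real.cos θl : ℂ) • T 0 + (Real.sin θl : ℂ) • T 1,
        (-(Real.sin θl : ℂ)) • T 0 + (Real.cos θl : ℂ) • T 1]
      ![(Real.cos θr : ℂ) • S 0 + (Real.sin θr : ℂ) • S 1,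
        (-(Real.sin θr : ℂ)) • S 0 + (Real.cos θr : ℂ) • S 1]) :
    IsBiFreeCentralLimit φ μ (T 0) (S 0) ∧ IsBiFreeCentralLimit φ μ (T 1) (S 1) := by
  obtain ⟨hθl1, hθl2⟩ := hθl
  obtain ⟨hθr1, hθr2⟩ := hθr
  have hpl : (Real.sin θl : ℂ) * (Real.sin θl : ℂ)
      + (Real.cos θl : ℂ) * (Real.cos θl : ℂ) = 1 := by
    exact_mod_cast congrArg (fun x : ℝ => (x : ℂ))
      (by linear_combination Real.sin_sq_add_cos_sq θl :
        Real.sin θl * Real.sin θl + Real.cos θl * Real.cos θl = 1)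
  have hpr : (Real.sin θr : ℂ) * (Real.sin θr : ℂ)
      + (Real.cos θr : ℂ) * (Real.cos θr : ℂ) = 1 := by
    exact_mod_cast congrArg (fun x : ℝ => (x : ℂ))
      (by linear_combination Real.sin_sq_add_cos_sq θr :
        Real.sin θr * Real.sin θr + Real.cos θr * Real.cos θr = 1)
  have hT0 : (Real.cos θl : ℂ) • ((Real.cos θl : ℂ) • T 0 + (Real.sin θl : ℂ) • T 1)
      + (-(Real.sin θl : ℂ)) • ((-(Real.sin θl : ℂ)) • T 0 + (Real.cos θl : ℂ) • T 1)
      = T 0 := by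
    match_scalars <;> simp only [← Complex.ofReal_sin, ← Complex.ofReal_cos]
    · linear_combination hpl
    · ring
  have hT1 : (Real.sin θl : ℂ) • ((Real.cos θl : ℂ) • T 0 + (Real.sin θl : ℂ) • T 1)
      + (Real.cos θl : ℂ) • ((-(Real.sin θl : ℂ)) • T 0 + (Real.cos θl : ℂ) • T 1)
      = T 1 := by
    match_scalars <;> simp only [← Complex.ofReal_sin, ← Complex.ofReal_cos]
    · ring
    · linear_combination hpl
  have hS0 : (Real.cos θr : ℂ) • ((Real.cos θr : ℂ) • S 0 + (Real.sin θr : ℂ) • S 1)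
      + (-(Real.sin θr : ℂ)) • ((-(Real.sin θr : ℂ)) • S 0 + (Real.cos θr : ℂ) • S 1)
      = S 0 := by
    match_scalars <;> simp only [← Complex.ofReal_sin, ← Complex.ofReal_cos]
    · linear_combination hpr
    · ring
  have hS1 : (Real.sin θr : ℂ) • ((Real.cos θr : ℂ) • S 0 + (Real.sin θr : ℂ) • S 1)
      + (Real.cos θr : ℂ) • ((-(Real.sin θr : ℂ)) • S 0 + (Real.cos θr : ℂ) • S 1)
      = S 1 := by
    match_scalars <;> simp only [← Complex.ofReal_sin, ← Complex.ofReal_cos]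
    · ring
    · linear_combination hpr
  have main : ∀ (n : ℕ), 3 ≤ n → ∀ χ : Fin n → Bool,
      cumulant φ χ (μ n χ) (onePart n) (fun i => if χ i = true then T 0 else S 0) = 0 ∧
      cumulant φ χ (μ n χ) (onePart n) (fun i => if χ i = true then T 1 else S 1) = 0 := by
    intro n hn χ
    have hn2 : 2 ≤ n := by omega
    have E1 := key_expand φ μ _ _ hbf34 hn2 χ
      ![(Real.cos θl : ℂ), -(Real.sin θl : ℂ)] ![(Real.cos θr : ℂ), -(Real.sin θr : ℂ)]
    have E2 := key_expand φ μ _ _ hbf34 hn2 χ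
      ![(Real.sin θl : ℂ), (Real.cos θl : ℂ)] ![(Real.sin θr : ℂ), (Real.cos θr : ℂ)]
    have E3 := key_expand φ μ T S hbf hn2 χ
      ![(Real.cos θl : ℂ), (Real.sin θl : ℂ)] ![(Real.cos θr : ℂ), (Real.sin θr : ℂ)]
    have E4 := key_expand φ μ T S hbf hn2 χ
      ![-(Real.sin θl : ℂ), (Real.cos θl : ℂ)] ![-(Real.sin θr : ℂ), (Real.cos θr : ℂ)]
    simp only [Matrix.cons_val_zero, Matrix.cons_val_one, Matrix.head_cons] at E1 E2 E3 E4
    rw [hT0, hS0] at E1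
    rw [hT1, hS1] at E2
    have hSc : (∏ i, if χ i = true then (Real.sin θl : ℂ) else (Real.sin θr : ℂ))
        = ((∏ i, Real.sin (if χ i = true then θl else θr) : ℝ) : ℂ) := by
      rw [Complex.ofReal_prod]
      exact Finset.prod_congr rfl fun i _ => by by_cases h : χ i = true <;> simp [h]
    have hCc : (∏ i, if χ i = true then (Real.cos θl : ℂ) else (Real.cos θr : ℂ))
        = ((∏ i, Real.cos (if χ i = true then θl else θr) : ℝ) : ℂ) := by
      rw [Complex.ofReal_prod]
      exact Finset.prod_congr rfl fun i _ => by by_cases h : χ i = true <;> simp [h]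
    have hNc : (∏ i, if χ i = true then -(Real.sin θl : ℂ) else -(Real.sin θr : ℂ))
        = (-1 : ℂ) ^ n * ((∏ i, Real.sin (if χ i = true then θl else θr) : ℝ) : ℂ) := by
      have h1 : ∀ i : Fin n, (if χ i = true then -(Real.sin θl : ℂ) else -(Real.sin θr : ℂ))
          = (-1) * (if χ i = true then (Real.sin θl : ℂ) else (Real.sin θr : ℂ)) := by
        intro i; by_cases h : χ i = true <;> simp [h]
      rw [Finset.prod_congr rfl fun i _ => h1 i, Finset.prod_mul_distrib,
        Finset.prod_const, Finset.card_univ, Fintype.card_fin, hSc]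
    simp only [hCc, hSc, hNc] at E1 E2 E3 E4
    obtain ⟨hrC, hrS, hrCS⟩ := sum_prod_lt_one hn (fun i => if χ i = true then θl else θr)
      (fun i => by by_cases h : χ i = true <;> simp only [h, if_true, if_false]
                   exacts [⟨hθl1, hθl2⟩, ⟨hθr1, hθr2⟩])
    set rC := ∏ i, Real.cos (if χ i = true then θl else θr) with hrCdef
    set rS := ∏ i, Real.sin (if χ i = true then θl else θr) with hrSdef
    set a := cumulant φ χ (μ n χ) (onePart n) (fun i => if χ i = true then T 0 else S 0)
      with hadef
    set b := cumulant φ χ (μ n χ) (onePart n) (fun i => if χ i = true then T 1 else S 1)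
      with hbdef
    rcases Nat.even_or_odd n with he | ho
    · have hpow : (-1 : ℂ) ^ n = 1 := he.neg_one_pow
      rw [hpow, one_mul] at E1 E4
      have hsum : ((1 : ℂ) - ((rC : ℂ) + (rS : ℂ)) ^ 2) * (a + b) = 0 := by
        linear_combination E1 + E2 + ((rC : ℂ) + (rS : ℂ)) * (E3 + E4)
      have hdiff : ((1 : ℂ) - ((rC : ℂ) - (rS : ℂ)) ^ 2) * (a - b) = 0 := by
        linear_combination E1 - E2 + ((rC : ℂ) - (rS : ℂ)) * (E3 - E4)
      have hne1 : ((1 : ℂ) - ((rC : ℂ) + (rS : ℂ)) ^ 2) ≠ 0 := by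
        rw [show ((1 : ℂ) - ((rC : ℂ) + (rS : ℂ)) ^ 2) = ((1 - (rC + rS) ^ 2 : ℝ) : ℂ) by
          push_cast; ring]
        exact Complex.ofReal_ne_zero.mpr (by nlinarith)
      have hne2 : ((1 : ℂ) - ((rC : ℂ) - (rS : ℂ)) ^ 2) ≠ 0 := by
        rw [show ((1 : ℂ) - ((rC : ℂ) - (rS : ℂ)) ^ 2) = ((1 - (rC - rS) ^ 2 : ℝ) : ℂ) by
          push_cast; ring]
        exact Complex.ofReal_ne_zero.mpr (by nlinarith)
      have hab : a + b = 0 := (mul_eq_zero.mp hsum).resolve_left hne1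
      have hamb : a - b = 0 := (mul_eq_zero.mp hdiff).resolve_left hne2
      constructor
      · linear_combination (hab + hamb) / 2
      · linear_combination (hab - hamb) / 2
    · have hpow : (-1 : ℂ) ^ n = -1 := ho.neg_one_pow
      rw [hpow] at E1 E4
      have hne : ((1 : ℂ) - (rC : ℂ) ^ 2 - (rS : ℂ) ^ 2) ≠ 0 := by
        rw [show ((1 : ℂ) - (rC : ℂ) ^ 2 - (rS : ℂ) ^ 2) = ((1 - rC ^ 2 - rS ^ 2 : ℝ) : ℂ) by
          push_cast; ring]
        exact Complex.ofReal_ne_zero.mpr (by nlinarith)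
      have hA : ((1 : ℂ) - (rC : ℂ) ^ 2 - (rS : ℂ) ^ 2) * a = 0 := by
        linear_combination E1 + (rC : ℂ) * E3 - (rS : ℂ) * E4
      have hB : ((1 : ℂ) - (rC : ℂ) ^ 2 - (rS : ℂ) ^ 2) * b = 0 := by
        linear_combination E2 + (rS : ℂ) * E3 + (rC : ℂ) * E4
      exact ⟨(mul_eq_zero.mp hA).resolve_left hne, (mul_eq_zero.mp hB).resolve_left hne⟩
  exact ⟨fun n hn χ => (main n hn χ).1, fun n hn χ => (main n hn χ).2⟩
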